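/- Let n ≥ 1, let c_1, …, c_n ∈ ℂ and a_1, …, a_n ∈ ℝ. Then the set {(μ, K) ∈ ℝ × ℝ : μ = K²/2 and μ = (1/2)∑_{l=1}^n c_l·exp(𝐢 K a_l)} is finite. -/

import Mathlib

open Filter Complex Set Topology

/-- The set of pairs `(μ, K) ∈ ℝ × ℝ` with `μ = K²/2` and
`μ = (1/2)∑ l, c l · exp(𝐢 K a l)` (an equality in `ℂ`) is finite. -/
theorem stmt4 (n : ℕ) (hn : 1 ≤ n) (c : Fin n → ℂ) (a : Fin n → ℝ) :
    {p : ℝ × ℝ | p.1 = p.2 ^ 2 / 2 ∧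
      (p.1 : ℂ) = (1 / 2) * ∑ l, c l * Complex.exp (Complex.I * ((p.2 * a l : ℝ) : ℂ))}.Finite := by
  set g : ℂ → ℂ := fun z => z ^ 2 - ∑ l, c l * Complex.exp (Complex.I * (z * (a l : ℂ))) with hg
  -- g is entire
  have hga : AnalyticOnNhd ℂ g Set.univ := by
    apply AnalyticOnNhd.sub
    · exact fun z _ => (analyticAt_id.pow 2)
    · rw [show (fun z : ℂ => ∑ l, c l * Complex.exp (Complex.I * (z * (a l : ℂ)))) = ∑ l, fun z : ℂ => c l * Complex.exp (Complex.I * (z * (a l : ℂ))) by ext z; simp [Finset.sum_apply]]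
      apply Finset.analyticOnNhd_sum
      intro l _
      exact fun z _ => analyticAt_const.mul
        (analyticAt_cexp.comp (analyticAt_const.mul (analyticAt_id.mul analyticAt_const)))
  -- bound for real z
  set R : ℝ := 1 + ∑ l, ‖c l‖ with hR
  have hRpos : 0 < R := by
    have : 0 ≤ ∑ l, ‖c l‖ := Finset.sum_nonneg fun l _ => (norm_nonneg _)
    linarith
  have hbound : ∀ x : ℝ, R < |x| → g x ≠ 0 := by
    intro x hx hzero
    have hx2 : ((x : ℂ)) ^ 2 = ∑ l, c l * Complex.exp (Complex.I * ((x : ℂ) * (a l : ℂ))) := by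
      have := sub_eq_zero.mp hzero
      simpa [hg] using this
    have habs : ‖(x : ℂ) ^ 2‖ ≤ ∑ l, ‖c l‖ := by
      rw [hx2]
      refine (norm_sum_le _ _).trans ?_
      apply Finset.sum_le_sum
      intro l _
      rw [norm_mul]
      have : ‖Complex.exp (Complex.I * ((x : ℂ) * (a l : ℂ)))‖ = 1 := by
        rw [Complex.norm_exp]
        norm_num [Complex.mul_re]
      rw [this, mul_one]
    have h1 : ‖(x : ℂ) ^ 2‖ = x ^ 2 := by
      rw [← Complex.ofReal_pow, Complex.norm_real, Real.norm_eq_abs, _root_.abs_of_nonneg (sq_nonneg x)]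
    have hxR : R < x ^ 2 := by
      have h1R : 1 ≤ R := by
        have : 0 ≤ ∑ l, ‖c l‖ := Finset.sum_nonneg fun l _ => (norm_nonneg _)
        linarith
      calc R < |x| := hx
        _ ≤ |x| * |x| := le_mul_of_one_le_left (abs_nonneg x) (le_trans h1R hx.le)
        _ = x ^ 2 := by rw [← abs_mul, ← sq, abs_sq]
    have : ∑ l, ‖c l‖ < x ^ 2 := by linarith
    rw [h1] at habs; linarith
  -- g is not identically zero
  have hgne : ¬ EqOn g 0 Set.univ := by
    intro h
    exact hbound (R + 1) (by rw [abs_of_pos (by linarith)]; linarith)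
      (h (mem_univ ((R + 1 : ℝ) : ℂ)))
  -- real zero set of g, lifted to ℂ
  set Z : Set ℂ := {z : ℂ | (∃ x : ℝ, z = x) ∧ g z = 0} with hZ
  have hZsub : Z ⊆ Metric.closedBall (0 : ℂ) R := by
    rintro z ⟨⟨x, rfl⟩, hz⟩
    simp only [Metric.mem_closedBall, dist_zero_right, Complex.norm_real, Real.norm_eq_abs]
    by_contra h
    exact hbound x (lt_of_not_ge h) hz
  have hZfin : Z.Finite := by
    by_contra hinf
    have hZinf : Z.Infinite := hinf
    obtain ⟨z₀, _, hacc⟩ := hZinf.exists_accPt_of_subset_isCompact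
      (isCompact_closedBall 0 R) hZsub
    have hfreq : ∃ᶠ z in 𝓝[≠] z₀, g z = 0 := by
      have : ∃ᶠ z in 𝓝[≠] z₀, z ∈ Z := by
        rw [AccPt] at hacc
        exact frequently_mem_iff_neBot.mpr hacc
      exact this.mono fun z hz => hz.2
    exact hgne (hga.eqOn_zero_of_preconnected_of_frequently_eq_zero isPreconnected_univ
      (mem_univ z₀) hfreq)
  -- transfer finiteness
  have key : {p : ℝ × ℝ | p.1 = p.2 ^ 2 / 2 ∧
      (p.1 : ℂ) = (1 / 2) * ∑ l, c l * Complex.exp (Complex.I * ((p.2 * a l : ℝ) : ℂ))}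
      ⊆ (fun z : ℂ => (z.re ^ 2 / 2, z.re)) '' Z := by
    rintro ⟨μ, K⟩ ⟨h1, h2⟩
    refine ⟨(K : ℂ), ⟨⟨K, rfl⟩, ?_⟩, ?_⟩
    · have : ((K : ℂ)) ^ 2 = ∑ l, c l * Complex.exp (Complex.I * ((K : ℂ) * (a l : ℂ))) := by
        have h2' : ((K ^ 2 / 2 : ℝ) : ℂ)
            = (1 / 2) * ∑ l, c l * Complex.exp (Complex.I * ((K : ℂ) * (a l : ℂ))) := by
          rw [← h1, h2]
          norm_cast
        have := h2'
        push_cast at this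
        field_simp at this
        rw [this]; exact Finset.sum_congr rfl fun l _ => by ring_nf
      simp [hg, this]
    · simp only [Complex.ofReal_re]
      exact Prod.ext h1.symm rfl
  exact (hZfin.image _).subset key
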